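/- Let G be a connected simple graph with maximum degree 3 and φ a δ-minimum edge-colouring of G. Let e₁ = uv₁ be an edge coloured δ such that v₁ has degree 2 in G. Then v₁ is the only vertex of degree 2 in the neighbourhood N(u) of u, and for any other edge e₂ = u₂v₂ coloured δ, the set {e₁, e₂} induces a subgraph isomorphic to 2K₂ (i.e., no end of e₁ is adjacent to or equal to an end of e₂). -/

import Mathlib

open SimpleGraph

namespace Parsimonious

/-- `φ` is a proper edge colouring of the set `F` of edges: two distinct edges of `F`
sharing a vertex receive different colours. -/
def ProperOn {V α : Type*} (F : Set (Sym2 V)) (φ : Sym2 V → α) : Prop :=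
  ∀ ⦃e₁⦄, e₁ ∈ F → ∀ ⦃e₂⦄, e₂ ∈ F → e₁ ≠ e₂ → (∃ v, v ∈ e₁ ∧ v ∈ e₂) → φ e₁ ≠ φ e₂

/-- `G` admits a proper edge colouring with `k` colours. -/
def EdgeColorable {V : Type*} (G : SimpleGraph V) (k : ℕ) : Prop :=
  ∃ φ : Sym2 V → Fin k, ProperOn G.edgeSet φ

/-- `γ(G)`: the largest fraction of the edges of `G` spanning a properly
3-edge-colourable subgraph. -/
noncomputable def gamma {V : Type*} (G : SimpleGraph V) : ℝ :=
  sSup {r : ℝ | ∃ F : Set (Sym2 V), F ⊆ G.edgeSet ∧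
    (∃ φ : Sym2 V → Fin 3, ProperOn F φ) ∧
    r = (F.ncard : ℝ) / (G.edgeSet.ncard : ℝ)}

/-- `s(G)`: the minimum number of edges coloured `δ` (colour `3`) over all proper
edge colourings of `G` with the four colours `α, β, γ, δ` (= `0, 1, 2, 3`). -/
noncomputable def sColor {V : Type*} (G : SimpleGraph V) : ℕ :=
  sInf {k : ℕ | ∃ φ : Sym2 V → Fin 4, ProperOn G.edgeSet φ ∧
    k = {e ∈ G.edgeSet | φ e = 3}.ncard}

/-- `φ` is a δ-minimum edge colouring of `G`. -/
def IsDeltaMin {V : Type*} (G : SimpleGraph V) (φ : Sym2 V → Fin 4) : Prop :=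
  ProperOn G.edgeSet φ ∧ {e ∈ G.edgeSet | φ e = 3}.ncard = sColor G

/-- The odd girth of `G`: the length of a shortest odd cycle. -/
noncomputable def oddGirth {V : Type*} (G : SimpleGraph V) : ℕ :=
  sInf {n : ℕ | Odd n ∧ ∃ (v : V) (c : G.Walk v v), c.IsCycle ∧ c.length = n}

/-- The Petersen graph, i.e. the Kneser graph `K(5,2)`. -/
def petersen : SimpleGraph {s : Finset (Fin 5) // s.card = 2} where
  Adj a b := Disjoint a.1 b.1
  symm := ⟨fun _ _ h => h.symm⟩
  loopless := ⟨fun a h => by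
    have h2 : a.1 = ∅ := disjoint_self.mp h
    have hc := a.2
    rw [show a.1 = ∅ from h2] at hc
    simp at hc⟩

/-- `φ(x,y)`: the subgraph of `G` spanned by the edges coloured `x` or `y`. -/
def twoColour {V : Type*} (G : SimpleGraph V) (φ : Sym2 V → Fin 4) (x y : Fin 4) :
    SimpleGraph V :=
  SimpleGraph.fromEdgeSet {e | e ∈ G.edgeSet ∧ (φ e = x ∨ φ e = y)}

/-- An edge is in `A_φ` when it is coloured `δ` and its ends are joined by a path
of `φ(α,β)`. -/
def InA {V : Type*} (G : SimpleGraph V) (φ : Sym2 V → Fin 4) (e : Sym2 V) : Prop :=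
  e ∈ G.edgeSet ∧ φ e = 3 ∧ ∀ u v : V, e = s(u, v) → (twoColour G φ 0 1).Reachable u v

/-- An edge is in `B_φ` when it is coloured `δ` and its ends are joined by a path
of `φ(β,γ)`. -/
def InB {V : Type*} (G : SimpleGraph V) (φ : Sym2 V → Fin 4) (e : Sym2 V) : Prop :=
  e ∈ G.edgeSet ∧ φ e = 3 ∧ ∀ u v : V, e = s(u, v) → (twoColour G φ 1 2).Reachable u v

/-- An edge is in `C_φ` when it is coloured `δ` and its ends are joined by a path
of `φ(α,γ)`. -/
def InC {V : Type*} (G : SimpleGraph V) (φ : Sym2 V → Fin 4) (e : Sym2 V) : Prop :=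
  e ∈ G.edgeSet ∧ φ e = 3 ∧ ∀ u v : V, e = s(u, v) → (twoColour G φ 0 2).Reachable u v

/-- The edge set of the odd cycle `C_{A_φ}(e)` associated to an edge `e ∈ A_φ`:
the component of `φ(α,β)` containing the ends of `e`, together with `e`. -/
def assocCycleA {V : Type*} (G : SimpleGraph V) (φ : Sym2 V → Fin 4) (e : Sym2 V) :
    Set (Sym2 V) :=
  insert e {f | f ∈ G.edgeSet ∧ (φ f = 0 ∨ φ f = 1) ∧
    ∃ x, x ∈ f ∧ ∃ y, y ∈ e ∧ (twoColour G φ 0 1).Reachable y x}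

/-- The edge set of the odd cycle `C_{B_φ}(e)` associated to an edge `e ∈ B_φ`. -/
def assocCycleB {V : Type*} (G : SimpleGraph V) (φ : Sym2 V → Fin 4) (e : Sym2 V) :
    Set (Sym2 V) :=
  insert e {f | f ∈ G.edgeSet ∧ (φ f = 1 ∨ φ f = 2) ∧
    ∃ x, x ∈ f ∧ ∃ y, y ∈ e ∧ (twoColour G φ 1 2).Reachable y x}

/-- The edge set of the odd cycle `C_{C_φ}(e)` associated to an edge `e ∈ C_φ`. -/
def assocCycleC {V : Type*} (G : SimpleGraph V) (φ : Sym2 V → Fin 4) (e : Sym2 V) :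
    Set (Sym2 V) :=
  insert e {f | f ∈ G.edgeSet ∧ (φ f = 0 ∨ φ f = 2) ∧
    ∃ x, x ∈ f ∧ ∃ y, y ∈ e ∧ (twoColour G φ 0 2).Reachable y x}

/-- The three sets `A_φ`, `B_φ`, `C_φ`. -/
def colourClass {V : Type*} (G : SimpleGraph V) (φ : Sym2 V → Fin 4) :
    Fin 3 → Set (Sym2 V)
  | 0 => {e | InA G φ e}
  | 1 => {e | InB G φ e}
  | 2 => {e | InC G φ e}

/-- `C` is one of the odd cycles associated to the δ-coloured edge `e`. -/
def IsAssocCycle {V : Type*} (G : SimpleGraph V) (φ : Sym2 V → Fin 4) (e : Sym2 V)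
    (C : Set (Sym2 V)) : Prop :=
  (InA G φ e ∧ C = assocCycleA G φ e) ∨
  (InB G φ e ∧ C = assocCycleB G φ e) ∨
  (InC G φ e ∧ C = assocCycleC G φ e)

end Parsimonious

section AuxTest
variable {V : Type*}

private lemma fin4_exists : ∀ x c : Fin 4, x ≠ c → x ≠ 3 → c ≠ 3 →
    ∃ y : Fin 4, y ≠ x ∧ y ≠ c ∧ y ≠ 3 := by decide

private lemma fin4_two : ∀ c : Fin 4, c ≠ 3 →
    ∃ m₁ m₂ : Fin 4, m₁ ≠ m₂ ∧ m₁ ≠ c ∧ m₂ ≠ c ∧ m₁ ≠ 3 ∧ m₂ ≠ 3 := by decide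

private lemma fin4_cover : ∀ x y c v : Fin 4, x ≠ y → x ≠ c → y ≠ c → x ≠ 3 → y ≠ 3 → c ≠ 3 →
    v = x ∨ v = y ∨ v = c ∨ v = 3 := by decide

def swapColour (x c v : Fin 4) : Fin 4 := if v = x then c else if v = c then x else v

private lemma swapColour_injective : ∀ x c : Fin 4, Function.Injective (swapColour x c) := by decide
private lemma swapColour_x : ∀ x c : Fin 4, swapColour x c x = c := by decide
private lemma swapColour_mem : ∀ x c v : Fin 4, (v = x ∨ v = c) →
    (swapColour x c v = x ∨ swapColour x c v = c) := by decide
private lemma swapColour_c : ∀ x c : Fin 4, swapColour x c c = x := by decide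
private lemma swapColour_ne3 : ∀ x c v : Fin 4, x ≠ 3 → c ≠ 3 → (v = x ∨ v = c) →
    swapColour x c v ≠ 3 := by decide

private lemma walk_closed {H : SimpleGraph V} {S : Set V}
    (hS : ∀ s ∈ S, ∀ t, H.Adj s t → t ∈ S) :
    ∀ {p q : V}, H.Walk p q → p ∈ S → q ∈ S
  | _, _, SimpleGraph.Walk.nil, hp => hp
  | _, _, SimpleGraph.Walk.cons h' w, hp => walk_closed hS w (hS _ hp _ h')

private lemma no_reach_pair {H : SimpleGraph V} {p a b : V} (hreach : H.Reachable a p)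
    (hpa : p ≠ a) (hpb : p ≠ b)
    (ha : ∀ t, H.Adj a t → t = b) (hb : ∀ t, H.Adj b t → t = a) : False := by
  obtain ⟨w⟩ := hreach
  have hmem : p ∈ ({a, b} : Set V) := by
    refine walk_closed ?_ w (Set.mem_insert _ _)
    rintro s (rfl | rfl) t ht
    · exact Or.inr (ha t ht)
    · exact Or.inl (hb t ht)
  rcases hmem with h | h
  exacts [hpa h, hpb h]

private lemma end_adj {H : SimpleGraph V} {x y : V} (Y : H.Walk x y) (hxy : x ≠ y) :
    ∃ t, H.Adj x t ∧ t ∈ Y.support := by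
  cases Y with
  | nil => exact absurd rfl hxy
  | @cons _ b _ h Y' =>
    exact ⟨b, h, by rw [Walk.support_cons]; exact List.mem_cons_of_mem _ Y'.start_mem_support⟩

private lemma end_adj_tail {H : SimpleGraph V} {x y : V} (Y : H.Walk x y) (hxy : x ≠ y) :
    ∃ t, H.Adj x t ∧ t ∈ Y.support.tail := by
  cases Y with
  | nil => exact absurd rfl hxy
  | @cons _ b _ h Y' =>
    exact ⟨b, h, by rw [Walk.support_cons]; exact Y'.start_mem_support⟩

end AuxTest

section AuxTest2
variable {V : Type*}

private lemma path_closed_aux {H : SimpleGraph V}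
    (hdeg2 : ∀ v s t r : V, H.Adj v s → H.Adj v t → H.Adj v r → s = t ∨ s = r ∨ t = r)
    {a b : V} (W : H.Walk a b) :
    W.IsPath → ∀ (S : Set V), (∀ v ∈ W.support, v ∈ S) → (∀ t, H.Adj a t → t ∈ S) →
      ∀ v ∈ W.support, v ≠ b → ∀ t, H.Adj v t → t ∈ S := by
  induction W with
  | nil =>
    intro _ S _ _ v hv hvb
    rw [Walk.support_nil, List.mem_singleton] at hv
    exact absurd hv hvb
  | @cons a a' b h W' ih =>
    intro hP S hsub hstart v hv hvb t ht
    rw [Walk.support_cons, List.mem_cons] at hv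
    rcases hv with rfl | hv
    · exact hstart t ht
    · cases W' with
      | nil =>
        rw [Walk.support_nil, List.mem_singleton] at hv
        exact absurd hv hvb
      | @cons a' a'' b h' W'' =>
        refine ih hP.of_cons S
          (fun x hx => hsub x (by rw [Walk.support_cons]; exact List.mem_cons_of_mem _ hx))
          ?_ v hv hvb t ht
        intro s hs
        have ha''mem : a'' ∈ (Walk.cons h' W'').support := by
          rw [Walk.support_cons]
          exact List.mem_cons_of_mem _ W''.start_mem_support
        have haa'' : a ≠ a'' := by
          have hnd := hP.support_nodup
          rw [Walk.support_cons, List.nodup_cons] at hnd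
          intro hEq
          exact hnd.1 (hEq ▸ ha''mem)
        rcases hdeg2 a' s a a'' hs h.symm h' with h1 | h2 | hF
        · exact h1 ▸ hsub a (Walk.start_mem_support _)
        · refine h2 ▸ hsub a'' ?_
          rw [Walk.support_cons]
          exact List.mem_cons_of_mem _ ha''mem
        · exact absurd hF haa''

private lemma threeLeaf {H : SimpleGraph V}
    (hdeg2 : ∀ v s t r : V, H.Adj v s → H.Adj v t → H.Adj v r → s = t ∨ s = r ∨ t = r)
    {p q r : V}
    (hp : ∀ s t, H.Adj p s → H.Adj p t → s = t)
    (hq : ∀ s t, H.Adj q s → H.Adj q t → s = t)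
    (hr : ∀ s t, H.Adj r s → H.Adj r t → s = t)
    (hpq : H.Reachable p q) (hpr : H.Reachable p r)
    (h1 : p ≠ q) (h2 : p ≠ r) (h3 : q ≠ r) : False := by
  classical
  obtain ⟨w0⟩ := hpq
  set W : H.Walk p q := w0.toPath.1 with hWdef
  have hW : W.IsPath := w0.toPath.2
  set S : Set V := {v | v ∈ W.support} with hSdef
  obtain ⟨tp, htp, htpS⟩ := end_adj W h1
  obtain ⟨tq, htq, htqS⟩ := end_adj W.reverse (Ne.symm h1)
  have htqS' : tq ∈ W.support := by rwa [Walk.support_reverse, List.mem_reverse] at htqS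
  have hstartp : ∀ t, H.Adj p t → t ∈ S := fun t ht => by
    have := hp t tp ht htp; exact this ▸ htpS
  have hstartq : ∀ t, H.Adj q t → t ∈ S := fun t ht => by
    have := hq t tq ht htq; exact this ▸ htqS'
  have hclosed : ∀ v ∈ S, ∀ t, H.Adj v t → t ∈ S := by
    intro v hv t ht
    by_cases hvq : v = q
    · subst hvq
      exact hstartq t ht
    · exact path_closed_aux hdeg2 W hW S (fun x hx => hx) hstartp v hv hvq t ht
  obtain ⟨wr⟩ := hpr
  have hrS : r ∈ W.support := walk_closed hclosed wr (Walk.start_mem_support W)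
  obtain ⟨t₁, ht₁, ht₁S⟩ := end_adj (W.takeUntil r hrS).reverse (Ne.symm h2)
  have ht₁S' : t₁ ∈ (W.takeUntil r hrS).support := by
    rwa [Walk.support_reverse, List.mem_reverse] at ht₁S
  obtain ⟨t₂, ht₂, ht₂S⟩ := end_adj_tail (W.dropUntil r hrS) (Ne.symm h3)
  have ht12 : t₁ = t₂ := hr t₁ t₂ ht₁ ht₂
  have hsup : W.support = (W.takeUntil r hrS).support ++ (W.dropUntil r hrS).support.tail := by
    conv_lhs => rw [← Walk.take_spec W hrS]
    exact Walk.support_append _ _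
  have hnd := hW.support_nodup
  rw [hsup, List.nodup_append] at hnd
  exact hnd.2.2 t₁ ht₁S' t₂ ht₂S ht12

end AuxTest2



section ColourAux
open Parsimonious
variable {V : Type*}

private lemma twoColour_adj {G : SimpleGraph V} {ψ : Sym2 V → Fin 4} {m n : Fin 4} {p t : V} :
    (twoColour G ψ m n).Adj p t ↔ G.Adj p t ∧ (ψ s(p, t) = m ∨ ψ s(p, t) = n) := by
  unfold twoColour
  rw [SimpleGraph.fromEdgeSet_adj]
  constructor
  · rintro ⟨⟨h1, h2⟩, -⟩
    exact ⟨(SimpleGraph.mem_edgeSet _).1 h1, h2⟩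
  · rintro ⟨h1, h2⟩
    exact ⟨⟨(SimpleGraph.mem_edgeSet _).2 h1, h2⟩, h1.ne⟩

private lemma colour_unique {G : SimpleGraph V} {ψ : Sym2 V → Fin 4}
    (hp : ProperOn G.edgeSet ψ) {a t t' : V} (h1 : G.Adj a t) (h2 : G.Adj a t')
    (he : ψ s(a, t) = ψ s(a, t')) : t = t' := by
  by_contra hne
  have hED : s(a, t) ≠ s(a, t') := fun h => hne (Sym2.congr_right.mp h)
  exact hp ((SimpleGraph.mem_edgeSet _).2 h1) ((SimpleGraph.mem_edgeSet _).2 h2) hED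
    ⟨a, Sym2.mem_mk_left _ _, Sym2.mem_mk_left _ _⟩ he

private lemma twoColour_maxdeg2 {G : SimpleGraph V} {ψ : Sym2 V → Fin 4}
    (hp : ProperOn G.edgeSet ψ) (m n : Fin 4) :
    ∀ v s t r : V, (twoColour G ψ m n).Adj v s → (twoColour G ψ m n).Adj v t →
      (twoColour G ψ m n).Adj v r → s = t ∨ s = r ∨ t = r := by
  intro v s t r hs ht hr
  rw [twoColour_adj] at hs ht hr
  rcases hs.2 with h1 | h1 <;> rcases ht.2 with h2 | h2 <;> rcases hr.2 with h3 | h3 <;>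
    first
      | exact Or.inl (colour_unique hp hs.1 ht.1 (h1.trans h2.symm))
      | exact Or.inr (Or.inl (colour_unique hp hs.1 hr.1 (h1.trans h3.symm)))
      | exact Or.inr (Or.inr (colour_unique hp ht.1 hr.1 (h2.trans h3.symm)))

private lemma sColor_le {V : Type*} (G : SimpleGraph V) (ψ : Sym2 V → Fin 4)
    (hψ : ProperOn G.edgeSet ψ) : sColor G ≤ {e ∈ G.edgeSet | ψ e = 3}.ncard :=
  Nat.sInf_le ⟨ψ, hψ, rfl⟩

private lemma recolour_contra {V : Type*} [Fintype V] (G : SimpleGraph V)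
    (ψ : Sym2 V → Fin 4) (hp : ProperOn G.edgeSet ψ)
    (hmin : {e ∈ G.edgeSet | ψ e = 3}.ncard = sColor G)
    {p q : V} (hpq : G.Adj p q) (h3 : ψ s(p, q) = 3) (m : Fin 4) (hm : m ≠ 3)
    (hno : ∀ g ∈ G.edgeSet, g ≠ s(p, q) → (p ∈ g ∨ q ∈ g) → ψ g ≠ m) : False := by
  classical
  set e : Sym2 V := s(p, q) with he
  set ψ' : Sym2 V → Fin 4 := fun g => if g = e then m else ψ g with hψ'
  have hprop : ProperOn G.edgeSet ψ' := by
    intro g₁ hg₁ g₂ hg₂ hne hshare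
    obtain ⟨v, hv₁, hv₂⟩ := hshare
    by_cases h1 : g₁ = e <;> by_cases h2 : g₂ = e
    · exact absurd (h1.trans h2.symm) hne
    · have hv : p ∈ g₂ ∨ q ∈ g₂ := by
        rcases Sym2.mem_iff.1 (h1 ▸ hv₁) with rfl | rfl
        · exact Or.inl hv₂
        · exact Or.inr hv₂
      simp only [hψ', h1, if_pos rfl, if_neg h2]
      exact fun hEq => hno g₂ hg₂ h2 hv hEq.symm
    · have hv : p ∈ g₁ ∨ q ∈ g₁ := by
        rcases Sym2.mem_iff.1 (h2 ▸ hv₂) with rfl | rfl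
        · exact Or.inl hv₁
        · exact Or.inr hv₁
      simp only [hψ', if_neg h1, h2, if_pos rfl]
      exact hno g₁ hg₁ h1 hv
    · simp only [hψ', if_neg h1, if_neg h2]
      exact hp hg₁ hg₂ hne ⟨v, hv₁, hv₂⟩
  have hemem : e ∈ {g ∈ G.edgeSet | ψ g = 3} := ⟨(SimpleGraph.mem_edgeSet _).2 hpq, h3⟩
  have hsub : {g ∈ G.edgeSet | ψ' g = 3} = {g ∈ G.edgeSet | ψ g = 3} \ {e} := by
    ext g
    by_cases hg : g = e
    · subst hg
      simp [hψ', hm]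
    · simp [hψ', hg]
  have hlt : {g ∈ G.edgeSet | ψ' g = 3}.ncard < {g ∈ G.edgeSet | ψ g = 3}.ncard := by
    rw [hsub]
    exact Set.ncard_diff_singleton_lt_of_mem hemem (Set.toFinite _)
  have := sColor_le G ψ' hprop
  omega

end ColourAux

section SwapAux
open Parsimonious
variable {V : Type*}

open scoped Classical in
noncomputable def swapped (G : SimpleGraph V) (ψ : Sym2 V → Fin 4) (x c : Fin 4) (R : Set V)
    (g : Sym2 V) : Fin 4 :=
  if g ∈ G.edgeSet ∧ (ψ g = x ∨ ψ g = c) ∧ ∃ w ∈ g, w ∈ R then swapColour x c (ψ g) else ψ g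

private lemma swapped_eq_of {G : SimpleGraph V} {ψ : Sym2 V → Fin 4} {x c : Fin 4} {R : Set V}
    {g : Sym2 V} (h : g ∈ G.edgeSet ∧ (ψ g = x ∨ ψ g = c) ∧ ∃ w ∈ g, w ∈ R) :
    swapped G ψ x c R g = swapColour x c (ψ g) := by
  unfold swapped
  rw [if_pos h]

private lemma swapped_eq_self {G : SimpleGraph V} {ψ : Sym2 V → Fin 4} {x c : Fin 4} {R : Set V}
    {g : Sym2 V} (h : ¬(g ∈ G.edgeSet ∧ (ψ g = x ∨ ψ g = c) ∧ ∃ w ∈ g, w ∈ R)) :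
    swapped G ψ x c R g = ψ g := by
  unfold swapped
  rw [if_neg h]

private lemma swapped_proper {G : SimpleGraph V} {ψ : Sym2 V → Fin 4} {x c : Fin 4} {R : Set V}
    (hp : ProperOn G.edgeSet ψ) (hxc : x ≠ c)
    (hR : ∀ g ∈ G.edgeSet, (ψ g = x ∨ ψ g = c) → (∃ w ∈ g, w ∈ R) → ∀ w ∈ g, w ∈ R) :
    ProperOn G.edgeSet (swapped G ψ x c R) := by
  intro g₁ hg₁ g₂ hg₂ hne hshare
  obtain ⟨v, hv₁, hv₂⟩ := hshare
  by_cases h1 : g₁ ∈ G.edgeSet ∧ (ψ g₁ = x ∨ ψ g₁ = c) ∧ ∃ w ∈ g₁, w ∈ R <;>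
    by_cases h2 : g₂ ∈ G.edgeSet ∧ (ψ g₂ = x ∨ ψ g₂ = c) ∧ ∃ w ∈ g₂, w ∈ R
  · rw [swapped_eq_of h1, swapped_eq_of h2]
    exact fun h => hp hg₁ hg₂ hne ⟨v, hv₁, hv₂⟩ (swapColour_injective x c h)
  · rw [swapped_eq_of h1, swapped_eq_self h2]
    intro hEq
    have hvR : v ∈ R := hR g₁ hg₁ h1.2.1 h1.2.2 v hv₁
    have hcol : ψ g₂ = x ∨ ψ g₂ = c := by
      rcases swapColour_mem x c (ψ g₁) h1.2.1 with h | h <;> rw [hEq] at h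
      · exact Or.inl h
      · exact Or.inr h
    exact h2 ⟨hg₂, hcol, v, hv₂, hvR⟩
  · rw [swapped_eq_self h1, swapped_eq_of h2]
    intro hEq
    have hvR : v ∈ R := hR g₂ hg₂ h2.2.1 h2.2.2 v hv₂
    have hcol : ψ g₁ = x ∨ ψ g₁ = c := by
      rcases swapColour_mem x c (ψ g₂) h2.2.1 with h | h <;> rw [← hEq] at h
      · exact Or.inl h
      · exact Or.inr h
    exact h1 ⟨hg₁, hcol, v, hv₁, hvR⟩
  · rw [swapped_eq_self h1, swapped_eq_self h2]
    exact hp hg₁ hg₂ hne ⟨v, hv₁, hv₂⟩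

private lemma swapped_delta {G : SimpleGraph V} {ψ : Sym2 V → Fin 4} {x c : Fin 4} {R : Set V}
    (hx3 : x ≠ 3) (hc3 : c ≠ 3) :
    {g ∈ G.edgeSet | swapped G ψ x c R g = 3} = {g ∈ G.edgeSet | ψ g = 3} := by
  ext g
  by_cases h : g ∈ G.edgeSet ∧ (ψ g = x ∨ ψ g = c) ∧ ∃ w ∈ g, w ∈ R
  · have h5 : ψ g ≠ 3 := by
      rcases h.2.1 with h' | h' <;> rw [h']
      exacts [hx3, hc3]
    have h6 : swapped G ψ x c R g ≠ 3 := by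
      rw [swapped_eq_of h]
      exact swapColour_ne3 x c (ψ g) hx3 hc3 h.2.1
    simp only [Set.mem_setOf_eq]
    exact ⟨fun hh => absurd hh.2 h6, fun hh => absurd hh.2 h5⟩
  · simp only [Set.mem_setOf_eq, swapped_eq_self h]

private lemma reachSet_closure {G : SimpleGraph V} {ψ : Sym2 V → Fin 4} {x c : Fin 4} {v₀ : V} :
    ∀ g ∈ G.edgeSet, (ψ g = x ∨ ψ g = c) →
      (∃ w ∈ g, w ∈ {t | (twoColour G ψ x c).Reachable v₀ t}) →
      ∀ w ∈ g, w ∈ {t | (twoColour G ψ x c).Reachable v₀ t} := by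
  intro g hg hcol htouch w' hw'
  obtain ⟨w, hw, hwR⟩ := htouch
  induction g using Sym2.ind with
  | _ p q =>
    have hadj : G.Adj p q := (SimpleGraph.mem_edgeSet _).1 hg
    by_cases hww : w = w'
    · exact hww ▸ hwR
    · have hHadj : (twoColour G ψ x c).Adj w w' := by
        rw [twoColour_adj]
        rcases Sym2.mem_iff.1 hw with rfl | rfl <;> rcases Sym2.mem_iff.1 hw' with rfl | rfl
        · exact absurd rfl hww
        · exact ⟨hadj, hcol⟩
        · exact ⟨hadj.symm, by rwa [Sym2.eq_swap] at hcol⟩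
        · exact absurd rfl hww
      exact hwR.trans hHadj.reachable

end SwapAux

section StructAux
open Parsimonious SimpleGraph
variable {V : Type*} [Fintype V] {G : SimpleGraph V} [DecidableRel G.Adj]

private lemma four_nbrs (hdeg : G.maxDegree ≤ 3) {z t1 t2 t3 t4 : V}
    (h1 : G.Adj z t1) (h2 : G.Adj z t2) (h3 : G.Adj z t3) (h4 : G.Adj z t4)
    (h12 : t1 ≠ t2) (h13 : t1 ≠ t3) (h14 : t1 ≠ t4)
    (h23 : t2 ≠ t3) (h24 : t2 ≠ t4) (h34 : t3 ≠ t4) : False := by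
  classical
  have hsub : ({t1, t2, t3, t4} : Finset V) ⊆ G.neighborFinset z := by
    intro t ht
    simp only [Finset.mem_insert, Finset.mem_singleton] at ht
    rw [mem_neighborFinset]
    rcases ht with rfl | rfl | rfl | rfl
    exacts [h1, h2, h3, h4]
  have hcard : ({t1, t2, t3, t4} : Finset V).card = 4 := by
    rw [Finset.card_insert_of_notMem (by simp [h12, h13, h14]),
        Finset.card_insert_of_notMem (by simp [h23, h24]),
        Finset.card_insert_of_notMem (by simp [h34]), Finset.card_singleton]
  have hd := G.degree_le_maxDegree z
  have hc := Finset.card_le_card hsub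
  rw [hcard, card_neighborFinset_eq_degree] at hc
  omega

private lemma nbrs_charact {z : V} (s : Finset V) (hsub : ∀ t ∈ s, G.Adj z t)
    (hcard : G.degree z ≤ s.card) : ∀ t, G.Adj z t → t ∈ s := by
  classical
  have h1 : s ⊆ G.neighborFinset z := by
    intro t ht
    rw [mem_neighborFinset]
    exact hsub t ht
  have h2 := Finset.eq_of_subset_of_card_le h1 (by rwa [card_neighborFinset_eq_degree])
  intro t ht
  rw [h2, mem_neighborFinset]
  exact ht

variable {ψ : Sym2 V → Fin 4} {u v₁ z₁ : V}

private lemma v1_nbrs (hz : G.Adj v₁ z₁) (hzu : z₁ ≠ u) (huv : G.Adj u v₁)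
    (hdv : G.degree v₁ = 2) : ∀ t, G.Adj v₁ t → t = u ∨ t = z₁ := by
  classical
  have hcard : ({u, z₁} : Finset V).card = 2 := by
    rw [Finset.card_insert_of_notMem (by simp only [Finset.mem_singleton]; exact fun h => hzu h.symm), Finset.card_singleton]
  have := nbrs_charact ({u, z₁} : Finset V) ?_ (by rw [hcard, hdv])
  · intro t ht
    have h := this t ht
    simpa using h
  · intro t ht
    simp only [Finset.mem_insert, Finset.mem_singleton] at ht
    rcases ht with rfl | rfl
    exacts [huv.symm, hz]

private lemma cne3 (hp : ProperOn G.edgeSet ψ) (huv : G.Adj u v₁) (h3 : ψ s(u, v₁) = 3)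
    (hz : G.Adj v₁ z₁) (hzu : z₁ ≠ u) : ψ s(v₁, z₁) ≠ 3 := by
  have hne : s(v₁, z₁) ≠ s(u, v₁) := by
    intro h
    rw [Sym2.eq_iff] at h
    rcases h with ⟨h1, _⟩ | ⟨_, h2⟩
    · exact huv.ne h1.symm
    · exact hzu h2
  intro hc
  exact hp ((mem_edgeSet _).2 hz) ((mem_edgeSet _).2 huv) hne
    ⟨v₁, Sym2.mem_mk_left _ _, Sym2.mem_mk_right _ _⟩ (hc.trans h3.symm)

private lemma presentAtU (hp : ProperOn G.edgeSet ψ)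
    (hmin : {e ∈ G.edgeSet | ψ e = 3}.ncard = sColor G)
    (huv : G.Adj u v₁) (h3 : ψ s(u, v₁) = 3) (hz : G.Adj v₁ z₁) (hzu : z₁ ≠ u)
    (hdv : G.degree v₁ = 2) (m : Fin 4) (hm3 : m ≠ 3) (hmc : m ≠ ψ s(v₁, z₁)) :
    ∃ pm, G.Adj u pm ∧ ψ s(u, pm) = m := by
  classical
  by_contra hno
  push_neg at hno
  refine recolour_contra G ψ hp hmin huv h3 m hm3 ?_
  intro g hg hge hmem
  rcases hmem with hu | hv
  · obtain ⟨t, rfl⟩ : ∃ t, g = s(u, t) := ⟨Sym2.Mem.other hu, (Sym2.other_spec hu).symm⟩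
    exact hno t ((mem_edgeSet _).1 hg)
  · obtain ⟨t, rfl⟩ : ∃ t, g = s(v₁, t) := ⟨Sym2.Mem.other hv, (Sym2.other_spec hv).symm⟩
    have hadj : G.Adj v₁ t := (mem_edgeSet _).1 hg
    rcases v1_nbrs hz hzu huv hdv t hadj with rfl | rfl
    · exact absurd Sym2.eq_swap hge
    · exact fun h => hmc h.symm

private lemma noCedge (hdeg : G.maxDegree ≤ 3) (hp : ProperOn G.edgeSet ψ)
    (hmin : {e ∈ G.edgeSet | ψ e = 3}.ncard = sColor G)
    (huv : G.Adj u v₁) (h3 : ψ s(u, v₁) = 3) (hz : G.Adj v₁ z₁) (hzu : z₁ ≠ u)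
    (hdv : G.degree v₁ = 2) : ∀ t, G.Adj u t → ψ s(u, t) ≠ ψ s(v₁, z₁) := by
  intro t ht hc
  have hc3 : ψ s(v₁, z₁) ≠ 3 := cne3 hp huv h3 hz hzu
  obtain ⟨m₁, m₂, h12, h1c, h2c, h13, h23⟩ := fin4_two (ψ s(v₁, z₁)) hc3
  obtain ⟨p₁, hp₁, hcol₁⟩ := presentAtU hp hmin huv h3 hz hzu hdv m₁ h13 h1c
  obtain ⟨p₂, hp₂, hcol₂⟩ := presentAtU hp hmin huv h3 hz hzu hdv m₂ h23 h2c
  refine four_nbrs hdeg ht hp₁ hp₂ huv ?_ ?_ ?_ ?_ ?_ ?_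
  · intro hEq; rw [hEq] at hc; exact h1c (hcol₁.symm.trans hc)
  · intro hEq; rw [hEq] at hc; exact h2c (hcol₂.symm.trans hc)
  · intro hEq; rw [hEq] at hc; exact hc3 (h3.symm.trans hc).symm
  · intro hEq; rw [← hEq] at hcol₂; exact h12 (hcol₁.symm.trans hcol₂)
  · intro hEq; rw [hEq] at hcol₁; exact h13 (hcol₁.symm.trans h3)
  · intro hEq; rw [hEq] at hcol₂; exact h23 (hcol₂.symm.trans h3)

private lemma K1 (hdeg : G.maxDegree ≤ 3) (hp : ProperOn G.edgeSet ψ)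
    (hmin : {e ∈ G.edgeSet | ψ e = 3}.ncard = sColor G)
    (huv : G.Adj u v₁) (h3 : ψ s(u, v₁) = 3) (hz : G.Adj v₁ z₁) (hzu : z₁ ≠ u)
    (hdv : G.degree v₁ = 2) (x : Fin 4) (hx3 : x ≠ 3) (hxc : x ≠ ψ s(v₁, z₁)) :
    (twoColour G ψ x (ψ s(v₁, z₁))).Reachable v₁ u := by
  classical
  by_contra hnr
  have hc3 : ψ s(v₁, z₁) ≠ 3 := cne3 hp huv h3 hz hzu
  set R : Set V := {t | (twoColour G ψ x (ψ s(v₁, z₁))).Reachable v₁ t} with hRdef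
  have hR := reachSet_closure (G := G) (ψ := ψ) (x := x) (c := ψ s(v₁, z₁)) (v₀ := v₁)
  have hp' : ProperOn G.edgeSet (swapped G ψ x (ψ s(v₁, z₁)) R) := swapped_proper hp hxc hR
  have hmin' : {e ∈ G.edgeSet | swapped G ψ x (ψ s(v₁, z₁)) R e = 3}.ncard = sColor G := by
    rw [swapped_delta hx3 hc3]; exact hmin
  have h3' : swapped G ψ x (ψ s(v₁, z₁)) R s(u, v₁) = 3 := by
    rw [swapped_eq_self ?_]
    · exact h3
    · rintro ⟨-, hcol, -⟩
      rcases hcol with h | h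
      · rw [h3] at h; exact hx3 h.symm
      · rw [h3] at h; exact hc3 h.symm
  have hv₁R : v₁ ∈ R := SimpleGraph.Reachable.refl v₁
  have hfval : swapped G ψ x (ψ s(v₁, z₁)) R s(v₁, z₁) = x := by
    rw [swapped_eq_of ⟨(mem_edgeSet _).2 hz, Or.inr rfl,
      ⟨v₁, Sym2.mem_mk_left _ _, hv₁R⟩⟩]
    exact swapColour_c x (ψ s(v₁, z₁))
  refine recolour_contra G (swapped G ψ x (ψ s(v₁, z₁)) R) hp' hmin' huv h3'
    (ψ s(v₁, z₁)) hc3 ?_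
  intro g hg hge hmem
  rcases hmem with hu | hv
  · obtain ⟨t, rfl⟩ : ∃ t, g = s(u, t) := ⟨Sym2.Mem.other hu, (Sym2.other_spec hu).symm⟩
    have hadj : G.Adj u t := (mem_edgeSet _).1 hg
    by_cases hcol : ψ s(u, t) = x
    · by_cases htouch : ∃ w ∈ (s(u, t) : Sym2 V), w ∈ R
      · exact absurd (hR _ hg (Or.inl hcol) htouch u (Sym2.mem_mk_left _ _)) hnr
      · rw [swapped_eq_self (fun hcond => htouch hcond.2.2), hcol]
        exact hxc
    · have hcolc : ψ s(u, t) ≠ ψ s(v₁, z₁) := noCedge hdeg hp hmin huv h3 hz hzu hdv t hadj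
      rw [swapped_eq_self ?_]
      · exact hcolc
      · rintro ⟨-, hcol', -⟩
        rcases hcol' with h | h
        exacts [hcol h, hcolc h]
  · obtain ⟨t, rfl⟩ : ∃ t, g = s(v₁, t) := ⟨Sym2.Mem.other hv, (Sym2.other_spec hv).symm⟩
    have hadj : G.Adj v₁ t := (mem_edgeSet _).1 hg
    rcases v1_nbrs hz hzu huv hdv t hadj with rfl | rfl
    · exact absurd Sym2.eq_swap hge
    · rw [hfval]
      exact hxc

end StructAux


open Parsimonious in
/-- If `e₁ = u v₁` is coloured `δ` by a δ-minimum edge colouring and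
`v₁` has degree 2, then `v₁` is the only vertex of degree 2 in `N(u)`, and for any
other δ-coloured edge `e₂ = u₂ v₂` the set `{e₁, e₂}` induces a `2K₂`. -/
theorem deltaMin_degree_two_end {V : Type*} [Fintype V] (G : SimpleGraph V)
    [DecidableRel G.Adj] (hconn : G.Connected) (hdeg : G.maxDegree ≤ 3)
    (φ : Sym2 V → Fin 4) (hφ : IsDeltaMin G φ)
    (u v₁ : V) (he₁ : G.Adj u v₁) (hδ₁ : φ s(u, v₁) = 3) (hdv₁ : G.degree v₁ = 2) :
    (∀ w ∈ G.neighborSet u, G.degree w = 2 → w = v₁) ∧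
    (∀ u₂ v₂ : V, G.Adj u₂ v₂ → φ s(u₂, v₂) = 3 → s(u₂, v₂) ≠ s(u, v₁) →
      ∀ x ∈ (s(u, v₁) : Sym2 V), ∀ y ∈ (s(u₂, v₂) : Sym2 V), x ≠ y ∧ ¬ G.Adj x y) := by
  classical
  obtain ⟨hp, hmin⟩ := hφ
  -- the second neighbour of v₁
  obtain ⟨z₁, hz₁e⟩ : ∃ z₁, z₁ ∈ (G.neighborFinset v₁).erase u := by
    have hu : u ∈ G.neighborFinset v₁ := by rw [mem_neighborFinset]; exact he₁.symm
    have hcp : 0 < ((G.neighborFinset v₁).erase u).card := by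
      rw [Finset.card_erase_of_mem hu, card_neighborFinset_eq_degree, hdv₁]
      omega
    exact Finset.card_pos.mp hcp
  have hzu : z₁ ≠ u := Finset.ne_of_mem_erase hz₁e
  have hz : G.Adj v₁ z₁ := by
    have h := Finset.mem_of_mem_erase hz₁e
    rwa [mem_neighborFinset] at h
  have hc3 : φ s(v₁, z₁) ≠ 3 := cne3 hp he₁ hδ₁ hz hzu
  have hnoC : ∀ t, G.Adj u t → φ s(u, t) ≠ φ s(v₁, z₁) :=
    noCedge hdeg hp hmin he₁ hδ₁ hz hzu hdv₁
  have hv1n : ∀ t, G.Adj v₁ t → t = u ∨ t = z₁ := v1_nbrs hz hzu he₁ hdv₁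
  have hK1 : ∀ x : Fin 4, x ≠ 3 → x ≠ φ s(v₁, z₁) →
      (twoColour G φ x (φ s(v₁, z₁))).Reachable v₁ u :=
    fun x hx3 hxc => K1 hdeg hp hmin he₁ hδ₁ hz hzu hdv₁ x hx3 hxc
  have hu3 : ∀ t, G.Adj u t → φ s(u, t) = 3 → t = v₁ :=
    fun t ht hcol => colour_unique hp ht he₁ (hcol.trans hδ₁.symm)
  have hvu : v₁ ≠ u := he₁.ne'
  have hswapuv : φ s(v₁, u) = 3 := by rw [Sym2.eq_swap]; exact hδ₁
  have hv₁only : ∀ m n : Fin 4, m ≠ 3 → n ≠ 3 →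
      ∀ s, (twoColour G φ m n).Adj v₁ s → s = z₁ := by
    intro m n hm hn s hs
    rw [twoColour_adj] at hs
    rcases hv1n s hs.1 with rfl | rfl
    · exfalso
      rcases hs.2 with h | h
      · rw [hswapuv] at h; exact hm h.symm
      · rw [hswapuv] at h; exact hn h.symm
    · rfl
  have hleafv₁ : ∀ m n : Fin 4, m ≠ 3 → n ≠ 3 →
      ∀ s t, (twoColour G φ m n).Adj v₁ s → (twoColour G φ m n).Adj v₁ t → s = t :=
    fun m n hm hn s t hs ht => (hv₁only m n hm hn s hs).trans (hv₁only m n hm hn t ht).symm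
  -- PART 1
  have part1 : ∀ w ∈ G.neighborSet u, G.degree w = 2 → w = v₁ := by
    intro w hw hdw
    by_contra hwv
    have hadj : G.Adj u w := hw
    have hx3 : φ s(u, w) ≠ 3 := fun h => hwv (hu3 w hadj h)
    have hxc : φ s(u, w) ≠ φ s(v₁, z₁) := hnoC w hadj
    obtain ⟨y, hyx, hyc, hy3⟩ := fin4_exists (φ s(u, w)) (φ s(v₁, z₁)) hxc hx3 hc3
    obtain ⟨py, hpy, hpyc⟩ := presentAtU hp hmin he₁ hδ₁ hz hzu hdv₁ y hy3 hyc
    have huFull : ∀ t, G.Adj u t → t = v₁ ∨ t = w ∨ t = py := by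
      intro t ht
      rcases fin4_cover (φ s(u, w)) y (φ s(v₁, z₁)) (φ s(u, t))
        (fun h => hyx h.symm) hxc hyc hx3 hy3 hc3 with h | h | h | h
      · exact Or.inr (Or.inl (colour_unique hp ht hadj h))
      · exact Or.inr (Or.inr (colour_unique hp ht hpy (h.trans hpyc.symm)))
      · exact absurd h (hnoC t ht)
      · exact Or.inl (hu3 t ht h)
    -- u's unique neighbour in the (x, c) graph is w
    have huLx : ∀ t, (twoColour G φ (φ s(u, w)) (φ s(v₁, z₁))).Adj u t → t = w := by
      intro t ht
      rw [twoColour_adj] at ht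
      rcases huFull t ht.1 with rfl | rfl | rfl
      · exfalso
        rcases ht.2 with h | h
        · exact hx3 (hδ₁.symm.trans h).symm
        · exact hc3 (hδ₁.symm.trans h).symm
      · rfl
      · exfalso
        rcases ht.2 with h | h
        · exact hyx (hpyc.symm.trans h)
        · exact hyc (hpyc.symm.trans h)
    by_cases hwOnly : ∀ t, (twoColour G φ (φ s(u, w)) (φ s(v₁, z₁))).Adj w t → t = u
    · exact no_reach_pair (hK1 (φ s(u, w)) hx3 hxc).symm hvu (fun h => hwv h.symm) huLx hwOnly
    push_neg at hwOnly
    obtain ⟨th, hthH, hthu⟩ := hwOnly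
    rw [twoColour_adj] at hthH
    have hthc : φ s(w, th) = φ s(v₁, z₁) := by
      rcases hthH.2 with h | h
      · exact absurd (colour_unique hp hthH.1 hadj.symm
          (h.trans (by rw [Sym2.eq_swap]))) hthu
      · exact h
    have hwn : ∀ t, G.Adj w t → t = u ∨ t = th := by
      have hcard2 : ({u, th} : Finset V).card = 2 := by
        rw [Finset.card_insert_of_notMem
          (by simp only [Finset.mem_singleton]; exact fun h => hthu h.symm),
          Finset.card_singleton]
      have hres := nbrs_charact ({u, th} : Finset V) ?_ (by rw [hcard2, hdw])
      · intro t ht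
        have h := hres t ht
        simpa using h
      · intro t ht
        simp only [Finset.mem_insert, Finset.mem_singleton] at ht
        rcases ht with rfl | rfl
        exacts [hadj.symm, hthH.1]
    by_cases hwR : (twoColour G φ y (φ s(v₁, z₁))).Reachable v₁ w
    · -- three leaves v₁, u, w in the (y,c) graph: impossible
      have hluA : ∀ t, (twoColour G φ y (φ s(v₁, z₁))).Adj u t → t = py := by
        intro t ht
        rw [twoColour_adj] at ht
        rcases huFull t ht.1 with rfl | rfl | rfl
        · exfalso
          rcases ht.2 with h | h
          · exact hy3 (hδ₁.symm.trans h).symm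
          · exact hc3 (hδ₁.symm.trans h).symm
        · exfalso
          rcases ht.2 with h | h
          · exact hyx h.symm
          · exact hxc h
        · rfl
      have hlwA : ∀ t, (twoColour G φ y (φ s(v₁, z₁))).Adj w t → t = th := by
        intro t ht
        rw [twoColour_adj] at ht
        rcases hwn t ht.1 with heq | heq
        · exfalso
          rw [heq, Sym2.eq_swap] at ht
          rcases ht.2 with h | h
          · exact hyx h.symm
          · exact hxc h
        · exact heq
      exact threeLeaf (twoColour_maxdeg2 hp y (φ s(v₁, z₁))) (hleafv₁ y (φ s(v₁, z₁)) hy3 hc3)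
        (fun s t hs ht => (hluA s hs).trans (hluA t ht).symm)
        (fun s t hs ht => (hlwA s hs).trans (hlwA t ht).symm)
        (hK1 y hy3 hyc) hwR hvu (fun h => hwv h.symm) hadj.ne
    · -- swap the (y, c) component of v₁ and apply K1 to the new colouring
      set R : Set V := {t | (twoColour G φ y (φ s(v₁, z₁))).Reachable v₁ t} with hRdef
      have hR := reachSet_closure (G := G) (ψ := φ) (x := y) (c := φ s(v₁, z₁)) (v₀ := v₁)
      have hp' : ProperOn G.edgeSet (swapped G φ y (φ s(v₁, z₁)) R) :=
        swapped_proper hp hyc hR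
      have hmin' : {e ∈ G.edgeSet | swapped G φ y (φ s(v₁, z₁)) R e = 3}.ncard = sColor G := by
        rw [swapped_delta hy3 hc3]; exact hmin
      have h3' : swapped G φ y (φ s(v₁, z₁)) R s(u, v₁) = 3 := by
        rw [swapped_eq_self ?_]
        · exact hδ₁
        · rintro ⟨-, hcol, -⟩
          rcases hcol with h | h
          · rw [hδ₁] at h; exact hy3 h.symm
          · rw [hδ₁] at h; exact hc3 h.symm
      have hv₁R : v₁ ∈ R := SimpleGraph.Reachable.refl v₁
      have hfval : swapped G φ y (φ s(v₁, z₁)) R s(v₁, z₁) = y := by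
        rw [swapped_eq_of ⟨(mem_edgeSet _).2 hz, Or.inr rfl,
          ⟨v₁, Sym2.mem_mk_left _ _, hv₁R⟩⟩]
        exact swapColour_c _ _
      have huvR : u ∈ R := hK1 y hy3 hyc
      have hgy' : swapped G φ y (φ s(v₁, z₁)) R s(u, py) = φ s(v₁, z₁) := by
        rw [swapped_eq_of ⟨(mem_edgeSet _).2 hpy, Or.inl hpyc,
          ⟨u, Sym2.mem_mk_left _ _, huvR⟩⟩, hpyc]
        exact swapColour_x _ _
      have hgx' : swapped G φ y (φ s(v₁, z₁)) R s(u, w) = φ s(u, w) := by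
        rw [swapped_eq_self ?_]
        rintro ⟨-, hcol, -⟩
        rcases hcol with h | h
        · exact hyx h.symm
        · exact hxc h
      have hh' : swapped G φ y (φ s(v₁, z₁)) R s(w, th) = φ s(w, th) := by
        rw [swapped_eq_self ?_]
        rintro ⟨-, -, w', hw', hw'R⟩
        exact hwR (hR s(w, th) ((mem_edgeSet _).2 hthH.1) (Or.inr hthc)
          ⟨w', hw', hw'R⟩ w (Sym2.mem_mk_left _ _))
      have hreach' := K1 hdeg hp' hmin' he₁ h3' hz hzu hdv₁ (φ s(u, w)) hx3
        (by rw [hfval]; exact fun h => hyx h.symm)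
      rw [hfval] at hreach'
      refine no_reach_pair hreach'.symm hvu (fun h => hwv h.symm) ?_ ?_
      · intro t ht
        rw [twoColour_adj] at ht
        rcases huFull t ht.1 with rfl | rfl | rfl
        · exfalso
          rcases ht.2 with h | h
          · rw [h3'] at h; exact hx3 h.symm
          · rw [h3'] at h; exact hy3 h.symm
        · rfl
        · exfalso
          rcases ht.2 with h | h
          · rw [hgy'] at h; exact hxc h.symm
          · rw [hgy'] at h; exact hyc h.symm
      · intro t ht
        rw [twoColour_adj] at ht
        rcases hwn t ht.1 with rfl | rfl
        · rfl
        · exfalso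
          rcases ht.2 with h | h
          · rw [hh', hthc] at h; exact hxc h.symm
          · rw [hh', hthc] at h; exact hyc h.symm
  refine ⟨part1, ?_⟩
  -- PART 2
  intro u₂ v₂ hadj2 h32 hne2 x' hx' y' hy'
  have hdist : ∀ x'' ∈ (s(u, v₁) : Sym2 V), ∀ y'' ∈ (s(u₂, v₂) : Sym2 V), x'' ≠ y'' := by
    intro a ha b hb hEq
    subst hEq
    exact hp ((mem_edgeSet _).2 hadj2) ((mem_edgeSet _).2 he₁) hne2
      ⟨a, hb, ha⟩ (h32.trans hδ₁.symm)
  refine ⟨hdist x' hx' y' hy', ?_⟩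
  intro hxy
  obtain ⟨y₂, he₂⟩ : ∃ y₂, (s(u₂, v₂) : Sym2 V) = s(y', y₂) := by
    rcases Sym2.mem_iff.1 hy' with rfl | rfl
    · exact ⟨v₂, rfl⟩
    · exact ⟨u₂, Sym2.eq_swap⟩
  have hy₂mem : y₂ ∈ (s(u₂, v₂) : Sym2 V) := by rw [he₂]; exact Sym2.mem_mk_right _ _
  have hadjy : G.Adj y' y₂ := (mem_edgeSet _).1 (he₂ ▸ ((mem_edgeSet _).2 hadj2))
  have h32' : φ s(y', y₂) = 3 := by rw [← he₂]; exact h32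
  have huy' : u ≠ y' := hdist u (Sym2.mem_mk_left _ _) y' hy'
  have hv₁y' : v₁ ≠ y' := hdist v₁ (Sym2.mem_mk_right _ _) y' hy'
  have huy₂ : u ≠ y₂ := hdist u (Sym2.mem_mk_left _ _) y₂ hy₂mem
  have hv₁y₂ : v₁ ≠ y₂ := hdist v₁ (Sym2.mem_mk_right _ _) y₂ hy₂mem
  rcases Sym2.mem_iff.1 hx' with heq | heq
  · -- x' = u : the end y' of e₂ is adjacent to u
    obtain rfl := heq.symm
    have hm3 : φ s(u, y') ≠ 3 := fun h => hv₁y' (hu3 y' hxy h).symm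
    have hmc : φ s(u, y') ≠ φ s(v₁, z₁) := hnoC y' hxy
    obtain ⟨n, hnm, hnc, hn3⟩ := fin4_exists (φ s(u, y')) (φ s(v₁, z₁)) hmc hm3 hc3
    obtain ⟨pn, hpn, hpnc⟩ := presentAtU hp hmin he₁ hδ₁ hz hzu hdv₁ n hn3 hnc
    have huFull : ∀ t, G.Adj u t → t = v₁ ∨ t = y' ∨ t = pn := by
      intro t ht
      rcases fin4_cover (φ s(u, y')) n (φ s(v₁, z₁)) (φ s(u, t))
        (fun h => hnm h.symm) hmc hnc hm3 hn3 hc3 with h | h | h | h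
      · exact Or.inr (Or.inl (colour_unique hp ht hxy h))
      · exact Or.inr (Or.inr (colour_unique hp ht hpn (h.trans hpnc.symm)))
      · exact absurd h (hnoC t ht)
      · exact Or.inl (hu3 t ht h)
    have huLm : ∀ t, (twoColour G φ (φ s(u, y')) (φ s(v₁, z₁))).Adj u t → t = y' := by
      intro t ht
      rw [twoColour_adj] at ht
      rcases huFull t ht.1 with rfl | rfl | rfl
      · exfalso
        rcases ht.2 with h | h
        · exact hm3 (hδ₁.symm.trans h).symm
        · exact hc3 (hδ₁.symm.trans h).symm
      · rfl
      · exfalso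
        rcases ht.2 with h | h
        · exact hnm (hpnc.symm.trans h)
        · exact hnc (hpnc.symm.trans h)
    have hswapuy : φ s(y', u) = φ s(u, y') := by rw [Sym2.eq_swap]
    -- y' has an edge coloured c
    by_cases hzOnly : ∀ t, (twoColour G φ (φ s(u, y')) (φ s(v₁, z₁))).Adj y' t → t = u
    · exact no_reach_pair (hK1 (φ s(u, y')) hm3 hmc).symm hvu hv₁y' huLm hzOnly
    push_neg at hzOnly
    obtain ⟨th, hthH, hthu⟩ := hzOnly
    rw [twoColour_adj] at hthH
    have hthc : φ s(y', th) = φ s(v₁, z₁) := by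
      rcases hthH.2 with h | h
      · exact absurd (colour_unique hp hthH.1 hxy.symm (h.trans hswapuy.symm)) hthu
      · exact h
    have hy₂th : y₂ ≠ th := by
      intro h
      rw [h] at h32'
      exact hc3 (hthc.symm.trans h32')
    have hzn : ∀ t, G.Adj y' t → t = u ∨ t = y₂ ∨ t = th := by
      have hcard3 : ({u, y₂, th} : Finset V).card = 3 := by
        rw [Finset.card_insert_of_notMem (by
            simp only [Finset.mem_insert, Finset.mem_singleton]
            rintro (rfl | rfl)
            · exact huy₂ rfl
            · exact hthu rfl),
          Finset.card_insert_of_notMem (by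
            simp only [Finset.mem_singleton]; exact hy₂th),
          Finset.card_singleton]
      have hres := nbrs_charact ({u, y₂, th} : Finset V) ?_
        (by rw [hcard3]; exact le_trans (G.degree_le_maxDegree y') hdeg)
      · intro t ht
        have h := hres t ht
        simpa using h
      · intro t ht
        simp only [Finset.mem_insert, Finset.mem_singleton] at ht
        rcases ht with rfl | rfl | rfl
        exacts [hxy.symm, hadjy, hthH.1]
    by_cases hzR : (twoColour G φ n (φ s(v₁, z₁))).Reachable v₁ y'
    · have hluA : ∀ t, (twoColour G φ n (φ s(v₁, z₁))).Adj u t → t = pn := by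
        intro t ht
        rw [twoColour_adj] at ht
        rcases huFull t ht.1 with rfl | rfl | rfl
        · exfalso
          rcases ht.2 with h | h
          · exact hn3 (hδ₁.symm.trans h).symm
          · exact hc3 (hδ₁.symm.trans h).symm
        · exfalso
          rcases ht.2 with h | h
          · exact hnm (h.symm)
          · exact hmc h
        · rfl
      have hlzA : ∀ t, (twoColour G φ n (φ s(v₁, z₁))).Adj y' t → t = th := by
        intro t ht
        rw [twoColour_adj] at ht
        rcases hzn t ht.1 with heq | heq | heq
        · exfalso
          rw [heq, Sym2.eq_swap] at ht
          rcases ht.2 with h | h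
          · exact hnm h.symm
          · exact hmc h
        · exfalso
          rw [heq] at ht
          rcases ht.2 with h | h
          · rw [h32'] at h; exact hn3 h.symm
          · rw [h32'] at h; exact hc3 h.symm
        · exact heq
      exact threeLeaf (twoColour_maxdeg2 hp n (φ s(v₁, z₁)))
        (hleafv₁ n (φ s(v₁, z₁)) hn3 hc3)
        (fun s t hs ht => (hluA s hs).trans (hluA t ht).symm)
        (fun s t hs ht => (hlzA s hs).trans (hlzA t ht).symm)
        (hK1 n hn3 hnc) hzR hvu hv₁y' huy'
    · set R : Set V := {t | (twoColour G φ n (φ s(v₁, z₁))).Reachable v₁ t} with hRdef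
      have hR := reachSet_closure (G := G) (ψ := φ) (x := n) (c := φ s(v₁, z₁)) (v₀ := v₁)
      have hp' : ProperOn G.edgeSet (swapped G φ n (φ s(v₁, z₁)) R) :=
        swapped_proper hp hnc hR
      have hmin' : {e ∈ G.edgeSet | swapped G φ n (φ s(v₁, z₁)) R e = 3}.ncard = sColor G := by
        rw [swapped_delta hn3 hc3]; exact hmin
      have h3' : swapped G φ n (φ s(v₁, z₁)) R s(u, v₁) = 3 := by
        rw [swapped_eq_self ?_]
        · exact hδ₁
        · rintro ⟨-, hcol, -⟩
          rcases hcol with h | h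
          · rw [hδ₁] at h; exact hn3 h.symm
          · rw [hδ₁] at h; exact hc3 h.symm
      have hv₁R : v₁ ∈ R := SimpleGraph.Reachable.refl v₁
      have hfval : swapped G φ n (φ s(v₁, z₁)) R s(v₁, z₁) = n := by
        rw [swapped_eq_of ⟨(mem_edgeSet _).2 hz, Or.inr rfl,
          ⟨v₁, Sym2.mem_mk_left _ _, hv₁R⟩⟩]
        exact swapColour_c _ _
      have huvR : u ∈ R := hK1 n hn3 hnc
      have hgn' : swapped G φ n (φ s(v₁, z₁)) R s(u, pn) = φ s(v₁, z₁) := by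
        rw [swapped_eq_of ⟨(mem_edgeSet _).2 hpn, Or.inl hpnc,
          ⟨u, Sym2.mem_mk_left _ _, huvR⟩⟩, hpnc]
        exact swapColour_x _ _
      have hgm' : swapped G φ n (φ s(v₁, z₁)) R s(u, y') = φ s(u, y') := by
        rw [swapped_eq_self ?_]
        rintro ⟨-, hcol, -⟩
        rcases hcol with h | h
        · exact hnm h.symm
        · exact hmc h
      have hh' : swapped G φ n (φ s(v₁, z₁)) R s(y', th) = φ s(y', th) := by
        rw [swapped_eq_self ?_]
        rintro ⟨-, -, w', hw', hw'R⟩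
        exact hzR (hR s(y', th) ((mem_edgeSet _).2 hthH.1) (Or.inr hthc)
          ⟨w', hw', hw'R⟩ y' (Sym2.mem_mk_left _ _))
      have he₂' : swapped G φ n (φ s(v₁, z₁)) R s(y', y₂) = 3 := by
        rw [swapped_eq_self ?_]
        · exact h32'
        · rintro ⟨-, hcol, -⟩
          rcases hcol with h | h
          · rw [h32'] at h; exact hn3 h.symm
          · rw [h32'] at h; exact hc3 h.symm
      have hreach' := K1 hdeg hp' hmin' he₁ h3' hz hzu hdv₁ (φ s(u, y')) hm3
        (by rw [hfval]; exact fun h => hnm h.symm)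
      rw [hfval] at hreach'
      refine no_reach_pair hreach'.symm hvu hv₁y' ?_ ?_
      · intro t ht
        rw [twoColour_adj] at ht
        rcases huFull t ht.1 with rfl | rfl | rfl
        · exfalso
          rcases ht.2 with h | h
          · rw [h3'] at h; exact hm3 h.symm
          · rw [h3'] at h; exact hn3 h.symm
        · rfl
        · exfalso
          rcases ht.2 with h | h
          · rw [hgn'] at h; exact hmc h.symm
          · rw [hgn'] at h; exact hnc h.symm
      · intro t ht
        rw [twoColour_adj] at ht
        rcases hzn t ht.1 with rfl | rfl | rfl
        · rfl
        · exfalso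
          rcases ht.2 with h | h
          · rw [he₂'] at h; exact hm3 h.symm
          · rw [he₂'] at h; exact hn3 h.symm
        · exfalso
          rcases ht.2 with h | h
          · rw [hh', hthc] at h; exact hmc h.symm
          · rw [hh', hthc] at h; exact hnc h.symm
  · -- x' = v₁ : the end y' of e₂ is adjacent to v₁, so y' = z₁
    obtain rfl := heq.symm
    have hy'z : y' = z₁ := by
      rcases hv1n y' hxy with rfl | rfl
      · exact absurd rfl huy'
      · rfl
    obtain rfl := hy'z.symm
    have hz₁m : ∀ m : Fin 4, m ≠ 3 → m ≠ φ s(v₁, z₁) →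
        ∃ tm, G.Adj z₁ tm ∧ φ s(z₁, tm) = m ∧ tm ≠ v₁ := by
      intro m hm3 hmc
      by_cases hOnly : ∀ t, (twoColour G φ m (φ s(v₁, z₁))).Adj z₁ t → t = v₁
      · exact absurd (no_reach_pair (hK1 m hm3 hmc) he₁.ne (Ne.symm hzu)
          (hv₁only m (φ s(v₁, z₁)) hm3 hc3) hOnly) not_false
      push_neg at hOnly
      obtain ⟨t, ht, htv⟩ := hOnly
      rw [twoColour_adj] at ht
      refine ⟨t, ht.1, ?_, htv⟩
      rcases ht.2 with h | h
      · exact h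
      · exact absurd (colour_unique hp ht.1 hz.symm
          (h.trans (by rw [Sym2.eq_swap]))) htv
    obtain ⟨m₁, m₂, h12, h1c, h2c, h13, h23⟩ := fin4_two (φ s(v₁, z₁)) hc3
    obtain ⟨ta, hta, hcta, htav⟩ := hz₁m m₁ h13 h1c
    obtain ⟨tb, htb, hctb, htbv⟩ := hz₁m m₂ h23 h2c
    refine four_nbrs hdeg hz.symm hadjy hta htb ?_ ?_ ?_ ?_ ?_ ?_
    · exact hv₁y₂
    · exact fun h => htav h.symm
    · exact fun h => htbv h.symm
    · intro h
      rw [h] at h32'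
      exact h13 (hcta.symm.trans h32')
    · intro h
      rw [h] at h32'
      exact h23 (hctb.symm.trans h32')
    · intro h
      rw [h] at hcta
      exact h12 (hcta.symm.trans hctb)
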